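/- Let A ∈ ℝ^{m×n} have full column rank (rank(A) = n) and let B ∈ ℝ^{n×p} be a nonzero matrix. Denote by σ_min(·) the smallest nonzero singular value of a matrix. Then σ_min(AB) ≥ σ_min(A)·σ_min(B). -/

import Mathlib

open Matrix MeasureTheory ProbabilityTheory BigOperators

noncomputable section

/-- Frobenius norm of a real matrix. -/
def frob {m n : ℕ} (M : Matrix (Fin m) (Fin n) ℝ) : ℝ :=
  Real.sqrt (∑ i, ∑ j, (M i j) ^ 2)

/-- Euclidean norm of a vector in `ℝⁿ`. -/
def vnorm {n : ℕ} (v : Fin n → ℝ) : ℝ :=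
  Real.sqrt (∑ i, (v i) ^ 2)

/-- Spectral norm (operator 2-norm) of a real matrix. -/
def spec {m n : ℕ} (M : Matrix (Fin m) (Fin n) ℝ) : ℝ :=
  ‖LinearMap.toContinuousLinearMap (Matrix.toEuclideanLin M)‖

theorem isHermitian_tmul {m n : ℕ} (M : Matrix (Fin m) (Fin n) ℝ) :
    (Mᵀ * M).IsHermitian := by
  simpa [Matrix.conjTranspose_eq_transpose_of_trivial] using
    Matrix.isHermitian_conjTranspose_mul_self M

theorem posSemidef_tmul {m n : ℕ} (M : Matrix (Fin m) (Fin n) ℝ) :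
    (Mᵀ * M).PosSemidef := by
  simpa [Matrix.conjTranspose_eq_transpose_of_trivial] using
    Matrix.posSemidef_conjTranspose_mul_self M

/-- The `i`-th largest singular value (1-indexed) of a real matrix, i.e. the square root of the
`i`-th largest eigenvalue of `MᵀM`; junk value `0` when `i` is out of range. -/
def svalue {m n : ℕ} (M : Matrix (Fin m) (Fin n) ℝ) (i : ℕ) : ℝ :=
  if h : 1 ≤ i ∧ i ≤ n then
    Real.sqrt ((isHermitian_tmul M).eigenvalues
      (Tuple.sort (isHermitian_tmul M).eigenvalues ⟨n - i, by omega⟩))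
  else 0

/-- Membership in the Stiefel manifold `St(m,r)`. -/
def Stiefel {m r : ℕ} (X : Matrix (Fin m) (Fin r) ℝ) : Prop :=
  Xᵀ * X = 1

/-- The Loewner order on (symmetric) real matrices: `A ⪯ B`. -/
def loewnerLE {m : ℕ} (A B : Matrix (Fin m) (Fin m) ℝ) : Prop :=
  (B - A).PosSemidef

/-- The inverse of the positive semidefinite square root of a matrix (junk value `0` when the
matrix is not positive semidefinite). -/
def sqrtInv {r : ℕ} (S : Matrix (Fin r) (Fin r) ℝ) : Matrix (Fin r) (Fin r) ℝ :=
  haveI := Classical.propDecidable S.PosSemidef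
  if h : S.PosSemidef then
    ((h.1.eigenvectorUnitary : Matrix (Fin r) (Fin r) ℝ) *
      diagonal ((↑) ∘ (√·) ∘ h.1.eigenvalues) *
      (star h.1.eigenvectorUnitary : Matrix (Fin r) (Fin r) ℝ))⁻¹ else 0

/-- The linear sensing map `𝓜` determined by feature matrices `M_i`:
`𝓜(B)_i = Tr(M_iᵀ B)`. -/
def calM {m n : ℕ} (Ms : Fin n → Matrix (Fin m) (Fin m) ℝ)
    (B : Matrix (Fin m) (Fin m) ℝ) : Fin n → ℝ :=
  fun i => ((Ms i)ᵀ * B).trace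

/-- The adjoint `𝓜*` of the sensing map: `𝓜*(y) = ∑ i, y_i M_i`. -/
def calMadj {m n : ℕ} (Ms : Fin n → Matrix (Fin m) (Fin m) ℝ)
    (y : Fin n → ℝ) : Matrix (Fin m) (Fin m) ℝ :=
  ∑ i, y i • Ms i

/-- `(𝓜*𝓜 − 𝓘)(B)`. -/
def calE {m n : ℕ} (Ms : Fin n → Matrix (Fin m) (Fin m) ℝ)
    (B : Matrix (Fin m) (Fin m) ℝ) : Matrix (Fin m) (Fin m) ℝ :=
  calMadj Ms (calM Ms B) - B

/-- The `(s, δ)`-restricted isometry property for the sensing map determined by `Ms`. -/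
def IsRIP {m n : ℕ} (Ms : Fin n → Matrix (Fin m) (Fin m) ℝ) (s : ℕ) (δ : ℝ) : Prop :=
  ∀ B : Matrix (Fin m) (Fin m) ℝ, B.IsSymm → B.rank ≤ s →
    (1 - δ) * frob B ^ 2 ≤ vnorm (calM Ms B) ^ 2 ∧
      vnorm (calM Ms B) ^ 2 ≤ (1 + δ) * frob B ^ 2

/-- The Riemannian gradient on the Stiefel manifold obtained from the Euclidean gradient `g`
at the point `X`. -/
def Rgrad {m r : ℕ} (X g : Matrix (Fin m) (Fin r) ℝ) : Matrix (Fin m) (Fin r) ℝ :=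
  (1 - X * Xᵀ) * g + (2⁻¹ : ℝ) • (X * (Xᵀ * g - gᵀ * X))

/-- One step of Riemannian gradient descent (with `μ = 2`) for the weight-normalized
matrix sensing problem. -/
def RGDstep {m r n : ℕ} (Ms : Fin n → Matrix (Fin m) (Fin m) ℝ)
    (A : Matrix (Fin m) (Fin m) ℝ) (η : ℝ)
    (p : Matrix (Fin m) (Fin r) ℝ × Matrix (Fin r) (Fin r) ℝ) :
    Matrix (Fin m) (Fin r) ℝ × Matrix (Fin r) (Fin r) ℝ :=
  let X := p.1
  let Θ := p.2
  let Gt := calMadj Ms (calM Ms (X * Θ * Xᵀ - A)) * X * Θ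
  let G := Rgrad X Gt
  let X' := (X - η • G) * sqrtInv (1 + η ^ 2 • (Gᵀ * G))
  let Θ' := X'ᵀ * A * X' - X'ᵀ * calE Ms (X' * Θ * X'ᵀ - A) * X'
  (X', Θ')

/-- The standard Gaussian ensemble on `m × r` real matrices (i.i.d. `N(0,1)` entries). -/
def gaussianEnsemble (m r : ℕ) : Measure (Fin m → Fin r → ℝ) :=
  Measure.pi fun _ : Fin m => Measure.pi fun _ : Fin r => gaussianReal 0 1

end

noncomputable section


section AuxForStmt17
open Finset

lemma aux_sorted {b r : ℕ} (g : Fin b → ℝ) (hm : Monotone g) (hnn : ∀ i, 0 ≤ g i)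
    (hcard : (Finset.univ.filter fun i => g i ≠ 0).card = r) (h1 : 1 ≤ r) (hrb : r ≤ b) :
    0 < g ⟨b - r, by omega⟩ ∧ ∀ i : Fin b, g i ≠ 0 → g ⟨b - r, by omega⟩ ≤ g i := by
  set k : Fin b := ⟨b - r, by omega⟩ with hk
  have step1 : ∀ i : Fin b, g i ≠ 0 → k ≤ i := by
    intro i hi
    by_contra hki
    push_neg at hki
    have hival : (i : ℕ) < b - r := hki
    have hpos : 0 < g i := lt_of_le_of_ne (hnn i) (Ne.symm hi)
    have hsub : Finset.Ici i ⊆ Finset.univ.filter fun j => g j ≠ 0 := by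
      intro j hj
      simp only [Finset.mem_Ici] at hj
      simp only [Finset.mem_filter, Finset.mem_univ, true_and]
      exact ne_of_gt (lt_of_lt_of_le hpos (hm hj))
    have hc := Finset.card_le_card hsub
    rw [Fin.card_Ici, hcard] at hc
    omega
  have hkpos : 0 < g k := by
    rcases lt_or_eq_of_le (hnn k) with h | h
    · exact h
    · exfalso
      have hsub : (Finset.univ.filter fun j => g j ≠ 0) ⊆ Finset.Ioi k := by
        intro j hj
        simp only [Finset.mem_filter, Finset.mem_univ, true_and] at hj
        have hle := step1 j hj
        rcases lt_or_eq_of_le hle with h2 | h2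
        · exact Finset.mem_Ioi.mpr h2
        · exact absurd (h2 ▸ h.symm) hj
      have hc := Finset.card_le_card hsub
      rw [Fin.card_Ioi, hcard] at hc
      simp only [hk] at hc
      omega
  exact ⟨hkpos, fun i hi => hm (step1 i hi)⟩

lemma aux_perm {b : ℕ} (g : Fin b → ℝ) (e : Equiv.Perm (Fin b)) :
    (Finset.univ.filter fun i => g (e i) ≠ 0).card
      = (Finset.univ.filter fun i => g i ≠ 0).card := by
  rw [← Fintype.card_subtype, ← Fintype.card_subtype]
  exact Fintype.card_congr (e.subtypeEquiv (fun a => Iff.rfl))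

lemma aux_rank_card {a b : ℕ} (M : Matrix (Fin a) (Fin b) ℝ) :
    (Finset.univ.filter fun i => (isHermitian_tmul M).eigenvalues i ≠ 0).card = M.rank := by
  rw [← Fintype.card_subtype]
  rw [← (isHermitian_tmul M).rank_eq_card_non_zero_eigs]
  exact Matrix.rank_transpose_mul_self M

lemma sval_facts {a b : ℕ} (M : Matrix (Fin a) (Fin b) ℝ) (hr1 : 1 ≤ M.rank) :
    0 < svalue M M.rank ∧
    (∃ j, (isHermitian_tmul M).eigenvalues j = svalue M M.rank ^ 2) ∧
    ∀ j, (isHermitian_tmul M).eigenvalues j ≠ 0 →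
      svalue M M.rank ^ 2 ≤ (isHermitian_tmul M).eigenvalues j := by
  have hrb : M.rank ≤ b := Matrix.rank_le_width M
  set ev := (isHermitian_tmul M).eigenvalues with hev
  set e := Tuple.sort ev with he
  have hmono : Monotone (ev ∘ e) := Tuple.monotone_sort ev
  have hnn : ∀ i, 0 ≤ (ev ∘ e) i := fun i => (posSemidef_tmul M).eigenvalues_nonneg (e i)
  have hcard : (Finset.univ.filter fun i => (ev ∘ e) i ≠ 0).card = M.rank := by
    have h1 := (aux_perm ev e).trans (aux_rank_card M)
    simpa [Function.comp] using h1
  obtain ⟨hpos, hmin⟩ := aux_sorted (ev ∘ e) hmono hnn hcard hr1 hrb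
  have hs : svalue M M.rank = Real.sqrt ((ev ∘ e) ⟨b - M.rank, by omega⟩) := by
    rw [svalue, dif_pos ⟨hr1, hrb⟩]; rfl
  have hsq : svalue M M.rank ^ 2 = (ev ∘ e) ⟨b - M.rank, by omega⟩ := by
    rw [hs, Real.sq_sqrt (le_of_lt hpos)]
  refine ⟨by rw [hs]; exact Real.sqrt_pos.mpr hpos,
    ⟨e ⟨b - M.rank, by omega⟩, by rw [hsq]; rfl⟩, ?_⟩
  intro j hj
  rw [hsq]
  have : ev (e (e.symm j)) ≠ 0 := by simpa using hj
  simpa using hmin (e.symm j) this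

lemma aux_ortho {b : ℕ} (S : Matrix (Fin b) (Fin b) ℝ) (hS : S.IsHermitian) (i j : Fin b) :
    ⇑(hS.eigenvectorBasis i) ⬝ᵥ ⇑(hS.eigenvectorBasis j) = if i = j then 1 else 0 := by
  have h := (orthonormal_iff_ite.mp hS.eigenvectorBasis.orthonormal) i j
  rw [EuclideanSpace.inner_eq_star_dotProduct] at h
  rw [dotProduct_comm]
  simpa using h

lemma aux_dot_mul {a b : ℕ} (M : Matrix (Fin a) (Fin b) ℝ) (x y : Fin b → ℝ) :
    x ⬝ᵥ ((Mᵀ * M) *ᵥ y) = (M *ᵥ x) ⬝ᵥ (M *ᵥ y) := by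
  rw [← Matrix.mulVec_mulVec, Matrix.dotProduct_mulVec, Matrix.vecMul_transpose]

lemma aux_inner_dot {b : ℕ} (x y : Fin b → ℝ) :
    (inner ℝ ((WithLp.equiv 2 (Fin b → ℝ)).symm x) ((WithLp.equiv 2 (Fin b → ℝ)).symm y) : ℝ)
      = x ⬝ᵥ y := by
  rw [WithLp.equiv_symm_apply, EuclideanSpace.inner_toLp_toLp, star_trivial, dotProduct_comm]

lemma aux_dot_sq {b : ℕ} (S : Matrix (Fin b) (Fin b) ℝ) (hS : S.IsHermitian) (v : Fin b → ℝ) :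
    v ⬝ᵥ v = ∑ j, (⇑(hS.eigenvectorBasis j) ⬝ᵥ v) ^ 2 := by
  have h := hS.eigenvectorBasis.sum_inner_mul_inner
    ((WithLp.equiv 2 (Fin b → ℝ)).symm v) ((WithLp.equiv 2 (Fin b → ℝ)).symm v)
  rw [aux_inner_dot] at h
  rw [← h]
  apply Finset.sum_congr rfl
  intro j _
  have h1 : (inner ℝ ((WithLp.equiv 2 (Fin b → ℝ)).symm v) (hS.eigenvectorBasis j) : ℝ)
      = ⇑(hS.eigenvectorBasis j) ⬝ᵥ v := by
    rw [real_inner_comm]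
    rw [show hS.eigenvectorBasis j
        = (WithLp.equiv 2 (Fin b → ℝ)).symm (⇑(hS.eigenvectorBasis j)) from rfl]
    exact aux_inner_dot _ _
  have h2 : (inner ℝ (hS.eigenvectorBasis j) ((WithLp.equiv 2 (Fin b → ℝ)).symm v) : ℝ)
      = ⇑(hS.eigenvectorBasis j) ⬝ᵥ v := by
    rw [show hS.eigenvectorBasis j
        = (WithLp.equiv 2 (Fin b → ℝ)).symm (⇑(hS.eigenvectorBasis j)) from rfl]
    exact aux_inner_dot _ _
  rw [h1, h2, sq]

lemma aux_quad {b : ℕ} (S : Matrix (Fin b) (Fin b) ℝ) (hS : S.IsHermitian) (v : Fin b → ℝ) :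
    v ⬝ᵥ (S *ᵥ v) = ∑ j, hS.eigenvalues j * (⇑(hS.eigenvectorBasis j) ⬝ᵥ v) ^ 2 := by
  have h := hS.eigenvectorBasis.sum_inner_mul_inner
    ((WithLp.equiv 2 (Fin b → ℝ)).symm v) ((WithLp.equiv 2 (Fin b → ℝ)).symm (S *ᵥ v))
  rw [aux_inner_dot] at h
  rw [← h]
  apply Finset.sum_congr rfl
  intro j _
  have h1 : (inner ℝ ((WithLp.equiv 2 (Fin b → ℝ)).symm v) (hS.eigenvectorBasis j) : ℝ)
      = ⇑(hS.eigenvectorBasis j) ⬝ᵥ v := by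
    rw [real_inner_comm]
    rw [show hS.eigenvectorBasis j
        = (WithLp.equiv 2 (Fin b → ℝ)).symm (⇑(hS.eigenvectorBasis j)) from rfl]
    exact aux_inner_dot _ _
  have h2 : (inner ℝ (hS.eigenvectorBasis j) ((WithLp.equiv 2 (Fin b → ℝ)).symm (S *ᵥ v)) : ℝ)
      = hS.eigenvalues j * (⇑(hS.eigenvectorBasis j) ⬝ᵥ v) := by
    rw [show hS.eigenvectorBasis j
        = (WithLp.equiv 2 (Fin b → ℝ)).symm (⇑(hS.eigenvectorBasis j)) from rfl]
    rw [aux_inner_dot]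
    have hsymm : Sᵀ = S := by
      rw [← Matrix.conjTranspose_eq_transpose_of_trivial]; exact hS.eq
    have hv : ∀ u : Fin b → ℝ, u ᵥ* S = S *ᵥ u := by
      intro u
      calc u ᵥ* S = u ᵥ* Sᵀᵀ := by rw [Matrix.transpose_transpose]
        _ = Sᵀ *ᵥ u := Matrix.vecMul_transpose _ _
        _ = S *ᵥ u := by rw [hsymm]
    rw [Matrix.dotProduct_mulVec, hv,
      hS.mulVec_eigenvectorBasis, smul_dotProduct]
    simp
  rw [h1, h2]; ring

lemma quad_lower {a b : ℕ} (M : Matrix (Fin a) (Fin b) ℝ) (β : ℝ) (hβ : 0 ≤ β)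
    (v : Fin b → ℝ)
    (hv0 : ∀ j, (isHermitian_tmul M).eigenvalues j = 0 →
      ⇑((isHermitian_tmul M).eigenvectorBasis j) ⬝ᵥ v = 0)
    (hβle : ∀ j, (isHermitian_tmul M).eigenvalues j ≠ 0 →
      β ≤ (isHermitian_tmul M).eigenvalues j) :
    β * (v ⬝ᵥ v) ≤ (M *ᵥ v) ⬝ᵥ (M *ᵥ v) := by
  rw [← aux_dot_mul, aux_quad (Mᵀ * M) (isHermitian_tmul M) v,
    aux_dot_sq (Mᵀ * M) (isHermitian_tmul M) v, Finset.mul_sum]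
  apply Finset.sum_le_sum
  intro j _
  by_cases h : (isHermitian_tmul M).eigenvalues j = 0
  · rw [hv0 j h, h]; simp
  · exact mul_le_mul_of_nonneg_right (hβle j h) (sq_nonneg _)

lemma aux_rank_pos {a b : ℕ} (M : Matrix (Fin a) (Fin b) ℝ) (h : M ≠ 0) : 1 ≤ M.rank := by
  by_contra hr
  push_neg at hr
  have h0 : M.rank = 0 := by omega
  apply h
  rw [Matrix.rank, Submodule.finrank_eq_zero] at h0
  rw [LinearMap.range_eq_bot] at h0
  ext i j
  have := congrFun (LinearMap.congr_fun h0 (Pi.single j 1)) i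
  simpa [Matrix.mulVecLin, Matrix.mulVec_single] using this

lemma aux_dot_self_nonneg {b : ℕ} (v : Fin b → ℝ) : 0 ≤ v ⬝ᵥ v :=
  Finset.sum_nonneg fun i _ => mul_self_nonneg _

end AuxForStmt17

theorem stmt17 {m n p : ℕ}
    (A : Matrix (Fin m) (Fin n) ℝ) (hA : A.rank = n)
    (B : Matrix (Fin n) (Fin p) ℝ) (hB : B ≠ 0) :
    svalue A A.rank * svalue B B.rank ≤ svalue (A * B) (A * B).rank := by
  classical
  -- n ≥ 1
  have hn : 1 ≤ n := by
    by_contra hn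
    push_neg at hn
    apply hB
    ext i j
    exact absurd i.isLt (by omega)
  have hrA : 1 ≤ A.rank := by omega
  obtain ⟨hαpos, -, hαmin⟩ := sval_facts A hrA
  set α := svalue A A.rank with hα
  -- all eigenvalues of AᵀA are nonzero
  have hallA : ∀ j, (isHermitian_tmul A).eigenvalues j ≠ 0 := by
    have hc := aux_rank_card A
    rw [hA] at hc
    have huniv : (Finset.univ.filter fun i => (isHermitian_tmul A).eigenvalues i ≠ 0)
        = Finset.univ := Finset.eq_univ_of_card _ (by simpa using hc)
    intro j
    have : j ∈ Finset.univ.filter fun i => (isHermitian_tmul A).eigenvalues i ≠ 0 := by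
      rw [huniv]; exact Finset.mem_univ j
    simpa using this
  -- lower bound for A on all vectors
  have hAb : ∀ w : Fin n → ℝ, α ^ 2 * (w ⬝ᵥ w) ≤ (A *ᵥ w) ⬝ᵥ (A *ᵥ w) := by
    intro w
    exact quad_lower A (α ^ 2) (sq_nonneg α) w
      (fun j hj => absurd hj (hallA j)) (fun j hj => hαmin j (hallA j))
  -- A * B ≠ 0
  have hABne : A * B ≠ 0 := by
    intro h0
    obtain ⟨i0, hrow⟩ : ∃ i0, B i0 ≠ 0 := by
      by_contra hc
      push_neg at hc
      exact hB (by ext i j; rw [hc i]; rfl)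
    obtain ⟨j0, hij⟩ : ∃ j0, B i0 j0 ≠ 0 := by
      by_contra hc
      push_neg at hc
      exact hrow (funext hc)
    set w : Fin n → ℝ := fun i => B i j0 with hw
    have hwne : w ⬝ᵥ w ≠ 0 := fun hz =>
      hij (congrFun (dotProduct_self_eq_zero.mp hz) i0)
    have hwpos : 0 < w ⬝ᵥ w := lt_of_le_of_ne (aux_dot_self_nonneg w) (Ne.symm hwne)
    have h1 : 0 < (A *ᵥ w) ⬝ᵥ (A *ᵥ w) :=
      lt_of_lt_of_le (by positivity) (hAb w)
    have h2 : A *ᵥ w = 0 := by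
      ext i
      have := congrFun (congrFun h0 i) j0
      simpa [Matrix.mul_apply, Matrix.mulVec, dotProduct, hw] using this
    rw [h2] at h1
    simp at h1
  -- facts for B and A*B
  obtain ⟨hβpos, -, hβmin⟩ := sval_facts B (aux_rank_pos B hB)
  set β := svalue B B.rank with hβ
  obtain ⟨hLpos, ⟨j₀, hj₀⟩, -⟩ := sval_facts (A * B) (aux_rank_pos (A * B) hABne)
  set lam := svalue (A * B) ((A * B).rank) with hlam
  set hC := isHermitian_tmul (A * B) with hhC
  set v : Fin p → ℝ := ⇑(hC.eigenvectorBasis j₀) with hv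
  have hvnorm : v ⬝ᵥ v = 1 := by
    have h := aux_ortho _ hC j₀ j₀
    rw [if_pos rfl] at h
    exact h
  have hCv : ((A * B)ᵀ * (A * B)) *ᵥ v = lam ^ 2 • v := by
    rw [hv, hC.mulVec_eigenvectorBasis, hj₀]
  -- orthogonality of v to zero eigenvectors of BᵀB
  set hSB := isHermitian_tmul B with hhSB
  have horth : ∀ j, hSB.eigenvalues j = 0 → ⇑(hSB.eigenvectorBasis j) ⬝ᵥ v = 0 := by
    intro j hj
    set u : Fin p → ℝ := ⇑(hSB.eigenvectorBasis j) with hu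
    have hBu : B *ᵥ u = 0 := by
      have h1 : (B *ᵥ u) ⬝ᵥ (B *ᵥ u) = 0 := by
        rw [← aux_dot_mul, hSB.mulVec_eigenvectorBasis, hj]
        simp
      exact dotProduct_self_eq_zero.mp h1
    have hCu : (A * B) *ᵥ u = 0 := by
      rw [← Matrix.mulVec_mulVec, hBu, Matrix.mulVec_zero]
    have h2 : u ⬝ᵥ (((A * B)ᵀ * (A * B)) *ᵥ v) = 0 := by
      rw [aux_dot_mul, hCu]
      simp
    rw [hCv, dotProduct_smul] at h2
    have hlamne : lam ^ 2 ≠ 0 := by positivity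
    have : u ⬝ᵥ v = 0 := by
      rcases mul_eq_zero.mp h2 with h | h
      · exact absurd h hlamne
      · exact h
    exact this
  -- lower bound for B at v
  have hBb : β ^ 2 * (v ⬝ᵥ v) ≤ (B *ᵥ v) ⬝ᵥ (B *ᵥ v) :=
    quad_lower B (β ^ 2) (sq_nonneg β) v horth (fun j hj => hβmin j hj)
  -- main chain
  have hmain : lam ^ 2 = ((A * B) *ᵥ v) ⬝ᵥ ((A * B) *ᵥ v) := by
    rw [← aux_dot_mul, hCv, dotProduct_smul, smul_eq_mul, hvnorm, mul_one]
  have hstep : α ^ 2 * (β ^ 2 * (v ⬝ᵥ v)) ≤ lam ^ 2 := by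
    rw [hmain]
    calc α ^ 2 * (β ^ 2 * (v ⬝ᵥ v)) ≤ α ^ 2 * ((B *ᵥ v) ⬝ᵥ (B *ᵥ v)) :=
          mul_le_mul_of_nonneg_left hBb (sq_nonneg α)
      _ ≤ (A *ᵥ (B *ᵥ v)) ⬝ᵥ (A *ᵥ (B *ᵥ v)) := hAb (B *ᵥ v)
      _ = ((A * B) *ᵥ v) ⬝ᵥ ((A * B) *ᵥ v) := by rw [Matrix.mulVec_mulVec]
  rw [hvnorm, mul_one] at hstep
  nlinarith [hαpos, hβpos, hLpos, mul_pos hαpos hβpos]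

end
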